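/- Let B be a Δ_b-n-bidemocratic basis and 0 < s ≤ 1. If B is C_{q,s}-n-s-quasi-greedy, then for all 0 < t ≤ 1 the dual basis B* is n-t-quasi-greedy with constant at most C_{q,s} + s⁻¹Δ_b + t⁻¹Δ_b. -/

import Mathlib

open Finset

private lemma approx_greedy (v : ℕ → ℝ) (c : ℝ) (hv : ∀ i, v i ≤ c) (δ : ℝ) (hδ : 0 < δ) :
    ∀ m : ℕ, ∃ A : Finset ℕ, A.card = m ∧ ∀ i ∈ A, ∀ j ∉ A, v j ≤ v i + δ := by
  intro m
  induction m with
  | zero => exact ⟨∅, rfl, by simp⟩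
  | succ n ih =>
    obtain ⟨A, hcard, hA⟩ := ih
    have hcompl : ((A : Set ℕ))ᶜ.Nonempty := (A.finite_toSet.infinite_compl).nonempty
    set S : Set ℝ := v '' ((A : Set ℕ))ᶜ with hS
    have hSne : S.Nonempty := hcompl.image v
    have hSb : BddAbove S := ⟨c, by rintro y ⟨j, -, rfl⟩; exact hv j⟩
    obtain ⟨y, hyS, hy⟩ := exists_lt_of_lt_csSup hSne (show sSup S - δ < sSup S by linarith)
    obtain ⟨j0, hj0, rfl⟩ := hyS
    have hj0A : j0 ∉ A := by simpa using hj0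
    refine ⟨insert j0 A, ?_, ?_⟩
    · rw [Finset.card_insert_of_notMem hj0A, hcard]
    · intro i hi j hj
      have hjA : j ∉ A := fun h => hj (Finset.mem_insert_of_mem h)
      rcases Finset.mem_insert.mp hi with rfl | hiA
      · have hle : v j ≤ sSup S := le_csSup hSb ⟨j, by simpa using hjA, rfl⟩
        linarith
      · exact hA i hiA j hjA

set_option maxHeartbeats 1000000 in
/-- If `B` is `Δb`-`n`-bidemocratic and `Cqs`-`n`-`s`-quasi-greedy
(`0 < s ≤ 1`), then for all `0 < t ≤ 1` the dual basis is `n`-`t`-quasi-greedy with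
constant at most `Cqs + s⁻¹Δb + t⁻¹Δb`. Bidemocracy is formalized in the equivalent
pairwise form `‖1_{εA}‖·‖1*_{ε'B}‖ ≤ Δb·n` for `|A|, |B| ≤ n ∈ 𝐧`. -/
theorem stmt10
    {X : Type*} [NormedAddCommGroup X] [NormedSpace ℝ X]
    (e : ℕ → X) (f : ℕ → X →L[ℝ] ℝ)
    (hbi : ∀ i j, f i (e j) = if i = j then (1 : ℝ) else 0)
    (α₁ α₂ : ℝ) (hα₁pos : 0 < α₁) (hα₂pos : 0 < α₂)
    (hα₁ : ∀ i, ‖e i‖ ≤ α₁) (hα₂ : ∀ i, ‖f i‖ ≤ α₂)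
    (nseq : ℕ → ℕ) (hmono : StrictMono nseq) (hn1 : 0 < nseq 0)
    (Δb : ℝ) (hΔb : 0 < Δb)
    (hbidem : ∀ (k : ℕ) (A B : Finset ℕ) (ε ε' : ℕ → ℝ),
      A.card ≤ nseq k → B.card ≤ nseq k →
      (∀ i ∈ A, |ε i| = 1) → (∀ i ∈ B, |ε' i| = 1) →
      ‖∑ i ∈ A, ε i • e i‖ * ‖∑ i ∈ B, ε' i • f i‖ ≤ Δb * (nseq k : ℝ))
    (s : ℝ) (hs0 : 0 < s) (hs1 : s ≤ 1)
    (Cqs : ℝ) (hCqs : 0 < Cqs)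
    (hqg : ∀ (x : X) (A : Finset ℕ), (∃ k, A.card = nseq k) →
      (∀ i ∈ A, ∀ j ∉ A, s * |f j x| ≤ |f i x|) →
      ‖∑ i ∈ A, f i x • e i‖ ≤ Cqs * ‖x‖) :
    ∀ (t : ℝ), 0 < t → t ≤ 1 →
      ∀ (g : X →L[ℝ] ℝ),
        g ∈ closure (↑(Submodule.span ℝ (Set.range f)) : Set (X →L[ℝ] ℝ)) →
        ∀ (B : Finset ℕ), (∃ k, B.card = nseq k) →
          (∀ i ∈ B, ∀ j ∉ B, t * |g (e j)| ≤ |g (e i)|) →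
          ‖∑ i ∈ B, g (e i) • f i‖ ≤ (Cqs + s⁻¹ * Δb + t⁻¹ * Δb) * ‖g‖ := by
  classical
  intro t ht0 ht1 g _hg B hBk hBg
  obtain ⟨k, hBcard⟩ := hBk
  have hm0 : 0 < nseq k := lt_of_lt_of_le hn1 (hmono.monotone (Nat.zero_le k))
  obtain ⟨m, hmcast⟩ : ∃ m : ℝ, m = (nseq k : ℝ) := ⟨_, rfl⟩
  have hmR : (0:ℝ) < m := by rw [hmcast]; exact_mod_cast hm0
  have hs' : (1:ℝ) ≤ s⁻¹ := (one_le_inv₀ hs0).mpr hs1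
  have hC : (0:ℝ) < Cqs + s⁻¹ * Δb + t⁻¹ * Δb := by positivity
  refine ContinuousLinearMap.opNorm_le_bound _ (by positivity) ?_
  intro x
  have happ : (∑ i ∈ B, g (e i) • f i) x = ∑ i ∈ B, f i x * g (e i) := by
    rw [ContinuousLinearMap.sum_apply]
    exact Finset.sum_congr rfl fun i _ => by
      rw [ContinuousLinearMap.smul_apply, smul_eq_mul, mul_comm]
  rw [happ, Real.norm_eq_abs]
  refine le_of_forall_pos_le_add ?_
  intro ε hε
  obtain ⟨δ, hδ0, hδerr⟩ : ∃ δ : ℝ, 0 < δ ∧ δ * ((Cqs + 2) * m * α₁ * ‖g‖) ≤ ε := by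
    have hK0 : (0:ℝ) < (Cqs + 2) * m * α₁ * (‖g‖ + 1) := by positivity
    refine ⟨ε / ((Cqs + 2) * m * α₁ * (‖g‖ + 1)), by positivity, ?_⟩
    have h1 : (Cqs + 2) * m * α₁ * ‖g‖ ≤ (Cqs + 2) * m * α₁ * (‖g‖ + 1) := by
      have : (0:ℝ) ≤ (Cqs + 2) * m * α₁ := by positivity
      nlinarith
    have h2 : ε / ((Cqs + 2) * m * α₁ * (‖g‖ + 1)) * ((Cqs + 2) * m * α₁ * (‖g‖ + 1)) = ε :=
      div_mul_cancel₀ ε hK0.ne'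
    calc ε / ((Cqs + 2) * m * α₁ * (‖g‖ + 1)) * ((Cqs + 2) * m * α₁ * ‖g‖)
        ≤ ε / ((Cqs + 2) * m * α₁ * (‖g‖ + 1)) * ((Cqs + 2) * m * α₁ * (‖g‖ + 1)) :=
          mul_le_mul_of_nonneg_left h1 (by positivity)
      _ = ε := h2
  -- notation
  set v : ℕ → ℝ := fun i => |f i x| with hvdef
  have hv0 : ∀ i, 0 ≤ v i := fun i => abs_nonneg _
  have hvb : ∀ i, v i ≤ α₂ * ‖x‖ := fun i =>
    le_trans ((f i).le_opNorm x) (mul_le_mul_of_nonneg_right (hα₂ i) (norm_nonneg x))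
  set sg : ℕ → ℝ := fun i => if 0 ≤ f i x then 1 else -1 with hsgdef
  set sgn : ℕ → ℝ := fun i => if 0 ≤ g (e i) then 1 else -1 with hsgndef
  have hsg1 : ∀ i, |sg i| = 1 := by
    intro i; by_cases h : 0 ≤ f i x <;> simp [hsgdef, h]
  have hsgn1 : ∀ i, |sgn i| = 1 := by
    intro i; by_cases h : 0 ≤ g (e i) <;> simp [hsgndef, h]
  have hsgmul : ∀ i, sg i * f i x = v i := by
    intro i; by_cases h : 0 ≤ f i x
    · simp [hsgdef, hvdef, h, abs_of_nonneg h]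
    · simp [hsgdef, hvdef, h, abs_of_neg (lt_of_not_ge h)]
  have hsgnmul : ∀ i, sgn i * g (e i) = |g (e i)| := by
    intro i; by_cases h : 0 ≤ g (e i)
    · simp [hsgndef, h, abs_of_nonneg h]
    · simp [hsgndef, h, abs_of_neg (lt_of_not_ge h)]
  have hgei : ∀ i, |g (e i)| ≤ ‖g‖ * α₁ := fun i =>
    le_trans (g.le_opNorm (e i)) (mul_le_mul_of_nonneg_left (hα₁ i) (norm_nonneg g))
  -- approximate greedy set A for x
  obtain ⟨A, hAcard, hAg⟩ := approx_greedy v (α₂ * ‖x‖) hvb δ hδ0 (nseq k)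
  -- perturbed vector x'
  set x' : X := x + δ • ∑ i ∈ A, sg i • e i with hx'def
  have hfx' : ∀ j, f j x' = f j x + (if j ∈ A then δ * sg j else 0) := by
    intro j
    rw [hx'def, map_add, map_smul, map_sum]
    simp only [map_smul, hbi, smul_eq_mul, mul_ite, mul_one, mul_zero]
    rw [Finset.sum_ite_eq A j sg]
    by_cases h : j ∈ A <;> simp [h, mul_comm]
  have hout : ∀ j ∉ A, f j x' = f j x := by
    intro j hj; rw [hfx' j, if_neg hj, add_zero]
  have hin : ∀ i ∈ A, |f i x'| = v i + δ := by
    intro i hi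
    rw [hfx' i, if_pos hi]
    by_cases h : 0 ≤ f i x
    · rw [hsgdef]; simp only [h, if_true, mul_one]
      rw [abs_of_nonneg (by linarith), hvdef]; simp [abs_of_nonneg h]
    · rw [hsgdef]; simp only [h, if_false, mul_neg_one]
      have h' : f i x < 0 := lt_of_not_ge h
      rw [abs_of_nonpos (by linarith), hvdef]; simp [abs_of_neg h']; ring
  have hA_greedy : ∀ i ∈ A, ∀ j ∉ A, s * |f j x'| ≤ |f i x'| := by
    intro i hi j hj
    rw [hout j hj, hin i hi]
    have h1 : s * |f j x| ≤ |f j x| := mul_le_of_le_one_left (abs_nonneg _) hs1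
    have h2 : v j ≤ v i + δ := hAg i hi j hj
    calc s * |f j x| ≤ |f j x| := h1
      _ = v j := rfl
      _ ≤ v i + δ := h2
  have hQ : ‖∑ i ∈ A, f i x' • e i‖ ≤ Cqs * ‖x'‖ := hqg x' A ⟨k, hAcard⟩ hA_greedy
  -- norm of x'
  have hones : ∀ (T : Finset ℕ) (σ : ℕ → ℝ), (∀ i, |σ i| = 1) →
      ‖∑ i ∈ T, σ i • e i‖ ≤ (T.card : ℝ) * α₁ := by
    intro T σ hσ
    calc ‖∑ i ∈ T, σ i • e i‖ ≤ ∑ i ∈ T, ‖σ i • e i‖ := norm_sum_le _ _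
      _ ≤ ∑ _i ∈ T, α₁ := Finset.sum_le_sum (fun i _ => by
          rw [norm_smul, Real.norm_eq_abs, hσ i, one_mul]; exact hα₁ i)
      _ = (T.card : ℝ) * α₁ := by rw [Finset.sum_const, nsmul_eq_mul]
  have hx'norm : ‖x'‖ ≤ ‖x‖ + δ * (m * α₁) := by
    rw [hx'def]
    calc ‖x + δ • ∑ i ∈ A, sg i • e i‖ ≤ ‖x‖ + ‖δ • ∑ i ∈ A, sg i • e i‖ := norm_add_le _ _
      _ = ‖x‖ + δ * ‖∑ i ∈ A, sg i • e i‖ := by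
          rw [norm_smul, Real.norm_eq_abs, abs_of_pos hδ0]
      _ ≤ ‖x‖ + δ * (m * α₁) := by
          have h := hones A sg hsg1
          rw [hAcard, ← hmcast] at h
          nlinarith
  -- splitting
  have hsplit : ∑ i ∈ B, f i x * g (e i)
      = (∑ i ∈ A, f i x * g (e i)) + (∑ i ∈ B \ A, f i x * g (e i))
        - (∑ i ∈ A \ B, f i x * g (e i)) := by
    have h1 := Finset.sum_inter_add_sum_sdiff B A (fun i => f i x * g (e i))
    have h2 := Finset.sum_inter_add_sum_sdiff A B (fun i => f i x * g (e i))
    rw [Finset.inter_comm A B] at h2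
    linarith
  -- bound for a "one-vector" of functionals applied to x
  have hfuncsum : ∀ (T : Finset ℕ), ∑ i ∈ T, v i ≤ ‖∑ i ∈ T, sg i • f i‖ * ‖x‖ := by
    intro T
    have h1 : (∑ i ∈ T, sg i • f i) x = ∑ i ∈ T, v i := by
      rw [ContinuousLinearMap.sum_apply]
      exact Finset.sum_congr rfl fun i _ => by
        rw [ContinuousLinearMap.smul_apply, smul_eq_mul, hsgmul i]
    calc ∑ i ∈ T, v i ≤ |∑ i ∈ T, v i| := le_abs_self _
      _ = ‖(∑ i ∈ T, sg i • f i) x‖ := by rw [h1, Real.norm_eq_abs]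
      _ ≤ ‖∑ i ∈ T, sg i • f i‖ * ‖x‖ := ContinuousLinearMap.le_opNorm _ _
  have hgsum : ∀ (T : Finset ℕ), ∑ i ∈ T, |g (e i)| ≤ ‖g‖ * ‖∑ i ∈ T, sgn i • e i‖ := by
    intro T
    have h1 : g (∑ i ∈ T, sgn i • e i) = ∑ i ∈ T, |g (e i)| := by
      rw [map_sum]
      exact Finset.sum_congr rfl fun i _ => by rw [map_smul, smul_eq_mul, hsgnmul i]
    calc ∑ i ∈ T, |g (e i)| = g (∑ i ∈ T, sgn i • e i) := h1.symm
      _ ≤ |g (∑ i ∈ T, sgn i • e i)| := le_abs_self _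
      _ = ‖g (∑ i ∈ T, sgn i • e i)‖ := (Real.norm_eq_abs _).symm
      _ ≤ ‖g‖ * ‖∑ i ∈ T, sgn i • e i‖ := ContinuousLinearMap.le_opNorm _ _
  have hgsumb : ∀ (T : Finset ℕ), ∑ i ∈ T, |g (e i)| ≤ (T.card : ℝ) * (‖g‖ * α₁) := by
    intro T
    calc ∑ i ∈ T, |g (e i)| ≤ ∑ _i ∈ T, ‖g‖ * α₁ := Finset.sum_le_sum (fun i _ => hgei i)
      _ = (T.card : ℝ) * (‖g‖ * α₁) := by rw [Finset.sum_const, nsmul_eq_mul]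
  -- Bound 1 : the A-part
  have hB1 : |∑ i ∈ A, f i x * g (e i)|
      ≤ Cqs * ‖g‖ * (‖x‖ + δ * (m * α₁)) + δ * (m * (‖g‖ * α₁)) := by
    have hdec : ∑ i ∈ A, f i x * g (e i)
        = (∑ i ∈ A, f i x' * g (e i)) - δ * ∑ i ∈ A, sg i * g (e i) := by
      rw [Finset.mul_sum, ← Finset.sum_sub_distrib]
      refine Finset.sum_congr rfl fun i hi => ?_
      rw [hfx' i, if_pos hi]; ring
    have h1 : |∑ i ∈ A, f i x' * g (e i)| ≤ ‖g‖ * (Cqs * ‖x'‖) := by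
      have heq : ∑ i ∈ A, f i x' * g (e i) = g (∑ i ∈ A, f i x' • e i) := by
        rw [map_sum]
        exact Finset.sum_congr rfl fun i _ => by rw [map_smul, smul_eq_mul, mul_comm]
      rw [heq]
      calc |g (∑ i ∈ A, f i x' • e i)| = ‖g (∑ i ∈ A, f i x' • e i)‖ := (Real.norm_eq_abs _).symm
        _ ≤ ‖g‖ * ‖∑ i ∈ A, f i x' • e i‖ := ContinuousLinearMap.le_opNorm _ _
        _ ≤ ‖g‖ * (Cqs * ‖x'‖) := mul_le_mul_of_nonneg_left hQ (norm_nonneg g)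
    have h2 : |δ * ∑ i ∈ A, sg i * g (e i)| ≤ δ * (m * (‖g‖ * α₁)) := by
      rw [abs_mul, abs_of_pos hδ0]
      refine mul_le_mul_of_nonneg_left ?_ hδ0.le
      calc |∑ i ∈ A, sg i * g (e i)| ≤ ∑ i ∈ A, |sg i * g (e i)| :=
            Finset.abs_sum_le_sum_abs _ _
        _ = ∑ i ∈ A, |g (e i)| := Finset.sum_congr rfl fun i _ => by
            rw [abs_mul, hsg1 i, one_mul]
        _ ≤ m * (‖g‖ * α₁) := by
            have h := hgsumb A; rw [hAcard, ← hmcast] at h; exact h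
    have h3 : ‖g‖ * (Cqs * ‖x'‖) ≤ Cqs * ‖g‖ * (‖x‖ + δ * (m * α₁)) := by
      have h := mul_le_mul_of_nonneg_left hx'norm (mul_nonneg hCqs.le (norm_nonneg g))
      calc ‖g‖ * (Cqs * ‖x'‖) = Cqs * ‖g‖ * ‖x'‖ := by ring
        _ ≤ Cqs * ‖g‖ * (‖x‖ + δ * (m * α₁)) := h
    calc |∑ i ∈ A, f i x * g (e i)|
        ≤ |∑ i ∈ A, f i x' * g (e i)| + |δ * ∑ i ∈ A, sg i * g (e i)| := by
          rw [hdec]; exact abs_sub _ _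
      _ ≤ Cqs * ‖g‖ * (‖x‖ + δ * (m * α₁)) + δ * (m * (‖g‖ * α₁)) := by
          have := h1.trans h3; linarith
  -- Bound 2 : the (B \ A)-part
  have hB2 : |∑ i ∈ B \ A, f i x * g (e i)|
      ≤ Δb * (‖g‖ * ‖x‖) + δ * (m * (‖g‖ * α₁)) := by
    set D := B \ A with hDdef
    have hDcardN : D.card ≤ nseq k := by
      rw [← hBcard]; exact Finset.card_le_card Finset.sdiff_subset
    set G := ∑ i ∈ D, |g (e i)| with hGdef
    set V := ∑ j ∈ A, v j with hVdef
    have hG0 : 0 ≤ G := Finset.sum_nonneg fun i _ => abs_nonneg _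
    have hV0 : 0 ≤ V := Finset.sum_nonneg fun i _ => hv0 i
    have habs : |∑ i ∈ D, f i x * g (e i)| ≤ ∑ i ∈ D, v i * |g (e i)| := by
      calc |∑ i ∈ D, f i x * g (e i)| ≤ ∑ i ∈ D, |f i x * g (e i)| :=
            Finset.abs_sum_le_sum_abs _ _
        _ = ∑ i ∈ D, v i * |g (e i)| := Finset.sum_congr rfl fun i _ => abs_mul _ _
    have hsum2 : m * ∑ i ∈ D, v i * |g (e i)| ≤ (V + m * δ) * G := by
      rw [Finset.mul_sum, hGdef, Finset.mul_sum]
      refine Finset.sum_le_sum fun i hi => ?_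
      have hiA : i ∉ A := (Finset.mem_sdiff.mp hi).2
      have hvi : m * v i ≤ V + m * δ := by
        have h1 : ∀ j ∈ A, v i ≤ v j + δ := fun j hj => hAg j hj i hiA
        have h2 : ∑ _j ∈ A, v i ≤ ∑ j ∈ A, (v j + δ) := Finset.sum_le_sum h1
        rw [Finset.sum_const, nsmul_eq_mul, hAcard, Finset.sum_add_distrib,
          Finset.sum_const, nsmul_eq_mul, hAcard, ← hmcast] at h2
        exact h2
      calc m * (v i * |g (e i)|) = (m * v i) * |g (e i)| := by ring
        _ ≤ (V + m * δ) * |g (e i)| := mul_le_mul_of_nonneg_right hvi (abs_nonneg _)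
    have hV1 : V ≤ ‖∑ j ∈ A, sg j • f j‖ * ‖x‖ := hfuncsum A
    have hG1 : G ≤ ‖g‖ * ‖∑ i ∈ D, sgn i • e i‖ := hgsum D
    have hbid : ‖∑ i ∈ D, sgn i • e i‖ * ‖∑ j ∈ A, sg j • f j‖ ≤ Δb * m :=
      hmcast ▸ hbidem k D A sgn sg hDcardN hAcard.le
        (fun i _ => hsgn1 i) (fun i _ => hsg1 i)
    have hVG : V * G ≤ Δb * m * (‖g‖ * ‖x‖) := by
      calc V * G ≤ (‖∑ j ∈ A, sg j • f j‖ * ‖x‖) * (‖g‖ * ‖∑ i ∈ D, sgn i • e i‖) :=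
            mul_le_mul hV1 hG1 hG0 (by positivity)
        _ = (‖∑ i ∈ D, sgn i • e i‖ * ‖∑ j ∈ A, sg j • f j‖) * (‖g‖ * ‖x‖) := by ring
        _ ≤ (Δb * m) * (‖g‖ * ‖x‖) :=
            mul_le_mul_of_nonneg_right hbid (by positivity)
        _ = Δb * m * (‖g‖ * ‖x‖) := by ring
    have hGb : G ≤ m * (‖g‖ * α₁) := by
      have h := hgsumb D
      have h2 : (D.card : ℝ) * (‖g‖ * α₁) ≤ m * (‖g‖ * α₁) := by
        have hc : (D.card : ℝ) ≤ m := by rw [hmcast]; exact_mod_cast hDcardN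
        exact mul_le_mul_of_nonneg_right hc (by positivity)
      exact h.trans h2
    have hfin : m * |∑ i ∈ D, f i x * g (e i)|
        ≤ m * (Δb * (‖g‖ * ‖x‖) + δ * (m * (‖g‖ * α₁))) := by
      calc m * |∑ i ∈ D, f i x * g (e i)| ≤ m * ∑ i ∈ D, v i * |g (e i)| :=
            mul_le_mul_of_nonneg_left habs hmR.le
        _ ≤ (V + m * δ) * G := hsum2
        _ = V * G + (m * δ) * G := by ring
        _ ≤ Δb * m * (‖g‖ * ‖x‖) + (m * δ) * (m * (‖g‖ * α₁)) :=
            add_le_add hVG (mul_le_mul_of_nonneg_left hGb (by positivity))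
        _ = m * (Δb * (‖g‖ * ‖x‖) + δ * (m * (‖g‖ * α₁))) := by ring
    exact le_of_mul_le_mul_left hfin hmR
  -- Bound 3 : the (A \ B)-part
  have hB3 : |∑ i ∈ A \ B, f i x * g (e i)| ≤ t⁻¹ * Δb * (‖g‖ * ‖x‖) := by
    set D' := A \ B with hD'def
    have hD'cardN : D'.card ≤ nseq k := by
      rw [← hAcard]; exact Finset.card_le_card Finset.sdiff_subset
    set H := ∑ j ∈ B, |g (e j)| with hHdef
    set V' := ∑ i ∈ D', v i with hV'def
    have hH0 : 0 ≤ H := Finset.sum_nonneg fun i _ => abs_nonneg _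
    have hV'0 : 0 ≤ V' := Finset.sum_nonneg fun i _ => hv0 i
    have habs : |∑ i ∈ D', f i x * g (e i)| ≤ ∑ i ∈ D', v i * |g (e i)| := by
      calc |∑ i ∈ D', f i x * g (e i)| ≤ ∑ i ∈ D', |f i x * g (e i)| :=
            Finset.abs_sum_le_sum_abs _ _
        _ = ∑ i ∈ D', v i * |g (e i)| := Finset.sum_congr rfl fun i _ => abs_mul _ _
    have hsum2 : (t * m) * ∑ i ∈ D', v i * |g (e i)| ≤ V' * H := by
      rw [Finset.mul_sum, hV'def, Finset.sum_mul]
      refine Finset.sum_le_sum fun i hi => ?_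
      have hiB : i ∉ B := (Finset.mem_sdiff.mp hi).2
      have hge : t * m * |g (e i)| ≤ H := by
        have h1 : ∀ j ∈ B, t * |g (e i)| ≤ |g (e j)| := fun j hj => hBg j hj i hiB
        have h2 : ∑ _j ∈ B, t * |g (e i)| ≤ ∑ j ∈ B, |g (e j)| := Finset.sum_le_sum h1
        rw [Finset.sum_const, nsmul_eq_mul, hBcard, ← hmcast] at h2
        calc t * m * |g (e i)| = m * (t * |g (e i)|) := by ring
          _ ≤ H := h2
      calc t * m * (v i * |g (e i)|) = v i * (t * m * |g (e i)|) := by ring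
        _ ≤ v i * H := mul_le_mul_of_nonneg_left hge (hv0 i)
    have hV1 : V' ≤ ‖∑ i ∈ D', sg i • f i‖ * ‖x‖ := hfuncsum D'
    have hH1 : H ≤ ‖g‖ * ‖∑ j ∈ B, sgn j • e j‖ := hgsum B
    have hbid : ‖∑ j ∈ B, sgn j • e j‖ * ‖∑ i ∈ D', sg i • f i‖ ≤ Δb * m :=
      hmcast ▸ hbidem k B D' sgn sg hBcard.le hD'cardN
        (fun i _ => hsgn1 i) (fun i _ => hsg1 i)
    have hVH : V' * H ≤ Δb * m * (‖g‖ * ‖x‖) := by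
      calc V' * H ≤ (‖∑ i ∈ D', sg i • f i‖ * ‖x‖) * (‖g‖ * ‖∑ j ∈ B, sgn j • e j‖) :=
            mul_le_mul hV1 hH1 hH0 (by positivity)
        _ = (‖∑ j ∈ B, sgn j • e j‖ * ‖∑ i ∈ D', sg i • f i‖) * (‖g‖ * ‖x‖) := by ring
        _ ≤ (Δb * m) * (‖g‖ * ‖x‖) :=
            mul_le_mul_of_nonneg_right hbid (by positivity)
        _ = Δb * m * (‖g‖ * ‖x‖) := by ring
    have htm : (0:ℝ) < t * m := mul_pos ht0 hmR
    have hfin : (t * m) * |∑ i ∈ D', f i x * g (e i)|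
        ≤ (t * m) * (t⁻¹ * Δb * (‖g‖ * ‖x‖)) := by
      have hrhs : (t * m) * (t⁻¹ * Δb * (‖g‖ * ‖x‖)) = Δb * m * (‖g‖ * ‖x‖) := by
        field_simp
      rw [hrhs]
      calc (t * m) * |∑ i ∈ D', f i x * g (e i)|
          ≤ (t * m) * ∑ i ∈ D', v i * |g (e i)| :=
            mul_le_mul_of_nonneg_left habs htm.le
        _ ≤ V' * H := hsum2
        _ ≤ Δb * m * (‖g‖ * ‖x‖) := hVH
    exact le_of_mul_le_mul_left hfin htm
  -- combine
  have htot : |∑ i ∈ B, f i x * g (e i)|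
      ≤ |∑ i ∈ A, f i x * g (e i)| + |∑ i ∈ B \ A, f i x * g (e i)|
        + |∑ i ∈ A \ B, f i x * g (e i)| := by
    rw [hsplit, sub_eq_add_neg]
    calc |∑ i ∈ A, f i x * g (e i) + ∑ i ∈ B \ A, f i x * g (e i)
          + -∑ i ∈ A \ B, f i x * g (e i)|
        ≤ |∑ i ∈ A, f i x * g (e i)| + |∑ i ∈ B \ A, f i x * g (e i)|
          + |-∑ i ∈ A \ B, f i x * g (e i)| := abs_add_three _ _ _
      _ = _ := by rw [abs_neg]
  have herr : Cqs * ‖g‖ * (δ * (m * α₁)) + δ * (m * (‖g‖ * α₁)) + δ * (m * (‖g‖ * α₁)) ≤ ε := by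
    have h1 : Cqs * ‖g‖ * (δ * (m * α₁)) + δ * (m * (‖g‖ * α₁)) + δ * (m * (‖g‖ * α₁))
        = δ * ((Cqs + 2) * m * α₁ * ‖g‖) := by ring
    rw [h1]; exact hδerr
  have hΔs : Δb * (‖g‖ * ‖x‖) ≤ s⁻¹ * Δb * (‖g‖ * ‖x‖) := by
    have h := mul_le_mul_of_nonneg_right hs'
      (mul_nonneg hΔb.le (mul_nonneg (norm_nonneg g) (norm_nonneg x)))
    calc Δb * (‖g‖ * ‖x‖) = 1 * (Δb * (‖g‖ * ‖x‖)) := by ring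
      _ ≤ s⁻¹ * (Δb * (‖g‖ * ‖x‖)) := h
      _ = s⁻¹ * Δb * (‖g‖ * ‖x‖) := by ring
  nlinarith [htot, hB1, hB2, hB3, herr, hΔs]
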